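/- Let f : ℝⁿ → ℝ be twice continuously differentiable with L_H-Lipschitz Hessian, L_H > 0. Fix x ∈ ℝⁿ, set g := ∇f(x) and H := ∇²f(x), and suppose g ≠ 0. Let σ > 0, ς₃ ∈ [0,1), κ_θ > 0, κ_C > 0, κ_a ≥ 1, η₁ > 0, set μ := [−λ_min(H)]₊, and suppose μ ≤ κ_C·√(σ‖g‖). Let s ∈ ℝⁿ satisfy ‖(H + (√(σ‖g‖) + μ)·I)s + g‖ ≤ ς₃·√(σ‖g‖)·‖s‖, and suppose the acceptance condition f(x) − f(x+s) ≥ η₁·(−⟨g,s⟩ − (1/2)⟨s,Hs⟩) holds. Then f(x) − f(x+s) ≥ η₁·(1−ς₃)·√(σ‖g‖)·((−(2+κ_C)·√(κ_a σ‖g‖) + √((2+κ_C)²·κ_a σ‖g‖ + 2 L_H ‖∇f(x+s)‖))/L_H)². -/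

import Mathlib

open RealInnerProductSpace

/-- The smallest eigenvalue of a symmetric operator on ℝⁿ, as the infimum of the
Rayleigh quotient over the unit sphere. -/
noncomputable def lamMin {n : ℕ} (T : EuclideanSpace ℝ (Fin n) → EuclideanSpace ℝ (Fin n)) : ℝ :=
  sInf {r : ℝ | ∃ v : EuclideanSpace ℝ (Fin n), ‖v‖ = 1 ∧ ⟪v, T v⟫ = r}

lemma taylor_grad_bound {n : ℕ}
    (f : EuclideanSpace ℝ (Fin n) → ℝ)
    (Hess : EuclideanSpace ℝ (Fin n) → EuclideanSpace ℝ (Fin n) →L[ℝ] EuclideanSpace ℝ (Fin n))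
    (LH : ℝ)
    (hHess : ∀ y, HasFDerivAt (gradient f) (Hess y) y)
    (hLip : ∀ y z, ‖Hess y - Hess z‖ ≤ LH * ‖y - z‖)
    (x s : EuclideanSpace ℝ (Fin n)) :
    ‖gradient f (x + s) - gradient f x - Hess x s‖ ≤ LH / 2 * ‖s‖ ^ 2 := by
  set ψ : ℝ → EuclideanSpace ℝ (Fin n) :=
    fun t => gradient f (x + t • s) - gradient f x - t • (Hess x s) with hψdef
  have hline : ∀ t : ℝ, HasDerivAt (fun t : ℝ => x + t • s) s t := fun t => by
    simpa using ((hasDerivAt_id t).smul_const s).const_add x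
  have hψ : ∀ t : ℝ, HasDerivAt ψ (Hess (x + t • s) s - Hess x s) t := by
    intro t
    have h1 : HasDerivAt (fun t : ℝ => gradient f (x + t • s)) (Hess (x + t • s) s) t :=
      by have := (hHess (x + t • s)).comp_hasDerivAt t (hline t); exact this
    have h2 : HasDerivAt (fun t : ℝ => t • (Hess x s)) (Hess x s) t := by
      simpa using (hasDerivAt_id t).smul_const (Hess x s)
    exact (h1.sub_const (gradient f x)).sub h2
  have key := image_norm_le_of_norm_deriv_right_le_deriv_boundary
    (f := ψ) (f' := fun t => Hess (x + t • s) s - Hess x s)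
    (a := 0) (b := 1)
    (fun t _ => (hψ t).continuousAt.continuousWithinAt)
    (fun t _ => (hψ t).hasDerivWithinAt)
    (B := fun t => LH / 2 * ‖s‖ ^ 2 * t ^ 2) (B' := fun t => LH * ‖s‖ ^ 2 * t)
    (by simp [hψdef])
    (fun t => by
      have := (hasDerivAt_pow 2 t).const_mul (LH / 2 * ‖s‖ ^ 2)
      exact this.congr_deriv (by push_cast; ring))
    (fun t ht => by
      have h0 : (0:ℝ) ≤ t := ht.1
      calc ‖Hess (x + t • s) s - Hess x s‖
          = ‖(Hess (x + t • s) - Hess x) s‖ := by simp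
        _ ≤ ‖Hess (x + t • s) - Hess x‖ * ‖s‖ :=
            ContinuousLinearMap.le_opNorm _ s
        _ ≤ (LH * ‖x + t • s - x‖) * ‖s‖ :=
            mul_le_mul_of_nonneg_right (hLip _ _) (norm_nonneg s)
        _ = LH * ‖s‖ ^ 2 * t := by
            simp [norm_smul, abs_of_nonneg h0]; ring)
  have := key (x := 1) (by norm_num)
  simpa [hψdef] using this

lemma lamMin_le_rayleigh {n : ℕ} (H : EuclideanSpace ℝ (Fin n) →L[ℝ] EuclideanSpace ℝ (Fin n))
    (s : EuclideanSpace ℝ (Fin n)) (hs : s ≠ 0) :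
    lamMin (fun v => H v) * ‖s‖ ^ 2 ≤ ⟪s, H s⟫ := by
  have hns : (0:ℝ) < ‖s‖ := norm_pos_iff.mpr hs
  set v : EuclideanSpace ℝ (Fin n) := ‖s‖⁻¹ • s with hv
  have hvn : ‖v‖ = 1 := by
    rw [hv, norm_smul]; simp [abs_of_nonneg (inv_nonneg.mpr hns.le), inv_mul_cancel₀ hns.ne']
  have hbdd : BddBelow {r : ℝ | ∃ v : EuclideanSpace ℝ (Fin n), ‖v‖ = 1 ∧ ⟪v, H v⟫ = r} := by
    refine ⟨-‖H‖, ?_⟩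
    rintro r ⟨w, hw, rfl⟩
    have h1 : |⟪w, H w⟫| ≤ ‖w‖ * ‖H w‖ := abs_real_inner_le_norm _ _
    have h2 : ‖H w‖ ≤ ‖H‖ * ‖w‖ := H.le_opNorm w
    rw [hw] at h1 h2
    simp only [one_mul, mul_one] at h1 h2
    have := (abs_le.mp (h1.trans h2)).1
    linarith
  have hle : lamMin (fun v => H v) ≤ ⟪v, H v⟫ :=
    csInf_le hbdd ⟨v, hvn, rfl⟩
  have hvv : ⟪v, H v⟫ = ‖s‖⁻¹ * (‖s‖⁻¹ * ⟪s, H s⟫) := by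
    rw [hv, map_smul, real_inner_smul_left, real_inner_smul_right]
  rw [hvv] at hle
  have h2 : lamMin (fun v => H v) * ‖s‖ ^ 2 ≤ (‖s‖⁻¹ * (‖s‖⁻¹ * ⟪s, H s⟫)) * ‖s‖ ^ 2 :=
    mul_le_mul_of_nonneg_right hle (by positivity)
  calc lamMin (fun v => H v) * ‖s‖ ^ 2 ≤ _ := h2
    _ = ⟪s, H s⟫ := by rw [pow_two]; field_simp

set_option maxHeartbeats 1000000 in
/-- Lemma 3.3 of the paper, inequality (3.13), specialized to the regularized
Newton step: objective decrease at a successful iteration in terms of the next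
gradient. -/
theorem decrease_successful_neig_step {n : ℕ}
    (f : EuclideanSpace ℝ (Fin n) → ℝ)
    (Hess : EuclideanSpace ℝ (Fin n) → EuclideanSpace ℝ (Fin n) →L[ℝ] EuclideanSpace ℝ (Fin n))
    (LH : ℝ) (hLH : 0 < LH)
    (hf : ContDiff ℝ 2 f)
    (hHess : ∀ y, HasFDerivAt (gradient f) (Hess y) y)
    (hLip : ∀ y z, ‖Hess y - Hess z‖ ≤ LH * ‖y - z‖)
    (x s : EuclideanSpace ℝ (Fin n))
    (hg : gradient f x ≠ 0)
    (σ ς₃ κθ κC κa η₁ : ℝ) (hσ : 0 < σ) (hς₃0 : 0 ≤ ς₃) (hς₃1 : ς₃ < 1) (hκθ : 0 < κθ)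
    (hκC : 0 < κC) (hκa : 1 ≤ κa) (hη₁ : 0 < η₁)
    (μ : ℝ) (hμ : μ = max (-(lamMin fun v => Hess x v)) 0)
    (hμκ : μ ≤ κC * Real.sqrt (σ * ‖gradient f x‖))
    (hres : ‖Hess x s + (Real.sqrt (σ * ‖gradient f x‖) + μ) • s + gradient f x‖
      ≤ ς₃ * Real.sqrt (σ * ‖gradient f x‖) * ‖s‖)
    (hacc : f x - f (x + s)
      ≥ η₁ * (-⟪gradient f x, s⟫ - (1 / 2) * ⟪s, Hess x s⟫)) :
    f x - f (x + s)
      ≥ η₁ * (1 - ς₃) * Real.sqrt (σ * ‖gradient f x‖)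
          * ((-(2 + κC) * Real.sqrt (κa * σ * ‖gradient f x‖)
              + Real.sqrt ((2 + κC) ^ 2 * (κa * σ * ‖gradient f x‖)
                  + 2 * LH * ‖gradient f (x + s)‖)) / LH) ^ 2 := by
  set g : EuclideanSpace ℝ (Fin n) := gradient f x with hgdef
  set lam : ℝ := Real.sqrt (σ * ‖g‖) with hlam
  have hgn : (0:ℝ) < ‖g‖ := norm_pos_iff.mpr hg
  have hσg : (0:ℝ) < σ * ‖g‖ := mul_pos hσ hgn
  have hlam0 : 0 < lam := Real.sqrt_pos.mpr hσg
  -- s ≠ 0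
  have hs0 : s ≠ 0 := by
    intro h
    rw [h] at hres
    simp at hres
    exact hg hres
  have hsn : (0:ℝ) < ‖s‖ := norm_pos_iff.mpr hs0
  have hμ0 : 0 ≤ μ := by rw [hμ]; exact le_max_right _ _
  -- residual
  set r : EuclideanSpace ℝ (Fin n) := Hess x s + (lam + μ) • s + g with hrdef
  have hrn : ‖r‖ ≤ ς₃ * lam * ‖s‖ := hres
  -- eigenvalue bound
  have heig : -μ * ‖s‖ ^ 2 ≤ ⟪s, Hess x s⟫ := by
    have h1 := lamMin_le_rayleigh (Hess x) s hs0
    have h2 : -μ ≤ lamMin (fun v => Hess x v) := by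
      rw [hμ]; have := le_max_left (-(lamMin fun v => Hess x v)) 0; linarith
    nlinarith [sq_nonneg ‖s‖]
  -- inner product identity
  have hinner : ⟪r, s⟫ = ⟪Hess x s, s⟫ + (lam + μ) * ‖s‖ ^ 2 + ⟪g, s⟫ := by
    rw [hrdef, inner_add_left, inner_add_left, real_inner_smul_left,
      real_inner_self_eq_norm_sq]
  have hrs : ⟪r, s⟫ ≤ ς₃ * lam * ‖s‖ ^ 2 := by
    have h1 : ⟪r, s⟫ ≤ ‖r‖ * ‖s‖ := real_inner_le_norm r s
    have h2 : ‖r‖ * ‖s‖ ≤ (ς₃ * lam * ‖s‖) * ‖s‖ :=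
      mul_le_mul_of_nonneg_right hrn (norm_nonneg s)
    nlinarith
  have hsym : ⟪Hess x s, s⟫ = ⟪s, Hess x s⟫ := real_inner_comm _ _
  -- model decrease bound
  have hmodel : -⟪g, s⟫ - (1 / 2) * ⟪s, Hess x s⟫ ≥ (1 - ς₃) * lam * ‖s‖ ^ 2 := by
    have : -⟪g, s⟫ = -⟪r, s⟫ + ⟪s, Hess x s⟫ + (lam + μ) * ‖s‖ ^ 2 := by
      rw [hinner, hsym]; ring
    rw [this]
    nlinarith [sq_nonneg ‖s‖]
  -- decrease bound
  have hdec : f x - f (x + s) ≥ η₁ * ((1 - ς₃) * lam * ‖s‖ ^ 2) := by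
    have := mul_le_mul_of_nonneg_left hmodel hη₁.le
    linarith [hacc]
  -- Taylor / gradient bound
  set G : ℝ := ‖gradient f (x + s)‖ with hG
  set A : ℝ := (2 + κC) * Real.sqrt (κa * σ * ‖g‖) with hA
  have hA0 : 0 ≤ A := by positivity
  have hlamA : (2 + κC) * lam ≤ A := by
    rw [hA, hlam]
    have : Real.sqrt (σ * ‖g‖) ≤ Real.sqrt (κa * σ * ‖g‖) := by
      apply Real.sqrt_le_sqrt; nlinarith
    nlinarith [Real.sqrt_nonneg (σ * ‖g‖)]
  have hGb : G ≤ LH / 2 * ‖s‖ ^ 2 + A * ‖s‖ := by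
    have ht := taylor_grad_bound f Hess LH hHess hLip x s
    have h1 : ‖gradient f x + Hess x s‖ = ‖r - (lam + μ) • s‖ := by
      rw [hrdef]; congr 1; abel
    have h2 : ‖r - (lam + μ) • s‖ ≤ ‖r‖ + (lam + μ) * ‖s‖ := by
      have h2a := norm_sub_le r ((lam + μ) • s)
      rw [norm_smul, Real.norm_eq_abs,
        abs_of_nonneg (by linarith : (0:ℝ) ≤ lam + μ)] at h2a
      exact h2a
    have h3 : G ≤ ‖gradient f (x + s) - gradient f x - Hess x s‖ + ‖gradient f x + Hess x s‖ := by
      calc G = ‖(gradient f (x + s) - gradient f x - Hess x s)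
            + (gradient f x + Hess x s)‖ := by rw [hG]; congr 1; abel
        _ ≤ _ := norm_add_le _ _
    have h4 : ‖r‖ + (lam + μ) * ‖s‖ ≤ (2 + κC) * lam * ‖s‖ := by
      have e1 : ς₃ * lam * ‖s‖ ≤ lam * ‖s‖ := by nlinarith [mul_pos hlam0 hsn]
      have e2 : μ * ‖s‖ ≤ κC * lam * ‖s‖ := mul_le_mul_of_nonneg_right hμκ hsn.le
      nlinarith
    have h5 : (2 + κC) * lam * ‖s‖ ≤ A * ‖s‖ :=
      mul_le_mul_of_nonneg_right hlamA (norm_nonneg s)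
    rw [h1] at h3
    linarith
  -- quadratic inequality
  set t : ℝ := (-A + Real.sqrt (A ^ 2 + 2 * LH * G)) / LH with htdef
  have hG0 : 0 ≤ G := norm_nonneg _
  have hsq : A ^ 2 + 2 * LH * G ≤ (A + LH * ‖s‖) ^ 2 := by nlinarith
  have hsqrt : Real.sqrt (A ^ 2 + 2 * LH * G) ≤ A + LH * ‖s‖ := by
    have := Real.sqrt_le_sqrt hsq
    rwa [Real.sqrt_sq (by positivity)] at this
  have hts : t ≤ ‖s‖ := by
    rw [htdef, div_le_iff₀ hLH]; nlinarith
  have ht0 : 0 ≤ t := by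
    rw [htdef]
    apply div_nonneg _ hLH.le
    have : A ≤ Real.sqrt (A ^ 2 + 2 * LH * G) := by
      have := Real.sqrt_le_sqrt (by nlinarith : A ^ 2 ≤ A ^ 2 + 2 * LH * G)
      rwa [Real.sqrt_sq hA0] at this
    linarith
  -- rewrite goal
  have hsqA : (2 + κC) ^ 2 * (κa * σ * ‖g‖) = A ^ 2 := by
    rw [hA, mul_pow, Real.sq_sqrt (by positivity)]
  have hgoal : η₁ * (1 - ς₃) * lam
      * ((-(2 + κC) * Real.sqrt (κa * σ * ‖g‖)
          + Real.sqrt ((2 + κC) ^ 2 * (κa * σ * ‖g‖) + 2 * LH * G)) / LH) ^ 2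
      = η₁ * (1 - ς₃) * lam * t ^ 2 := by
    rw [hsqA, htdef, hA]; ring_nf
  rw [hgoal]
  have hcoef : 0 ≤ η₁ * (1 - ς₃) * lam :=
    mul_nonneg (mul_nonneg hη₁.le (by linarith)) hlam0.le
  have htsq : t ^ 2 ≤ ‖s‖ ^ 2 := pow_le_pow_left₀ ht0 hts 2
  calc η₁ * (1 - ς₃) * lam * t ^ 2 ≤ η₁ * (1 - ς₃) * lam * ‖s‖ ^ 2 :=
        mul_le_mul_of_nonneg_left htsq hcoef
    _ = η₁ * ((1 - ς₃) * lam * ‖s‖ ^ 2) := by ring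
    _ ≤ f x - f (x + s) := hdec
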